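/- Let n ≥ 1, 0 < β < 1 and s ∈ [1, ∞). If b : ℝⁿ → ℝ satisfies b(x) ≥ 0 for all x and |b(x) − b(y)| ≤ C |x − y|^β for all x, y ∈ ℝⁿ, then there is a constant K (depending only on n, β, s, C) such that for every ball B ⊂ ℝⁿ, (|B|⁻¹ ∫_B | b(x) − M_B b(x) |^s dx)^{1/s} ≤ K |B|^{β/n}. -/

import Mathlib

open MeasureTheory Metric Set
open scoped ENNReal NNReal

/-- The fractional maximal function `M_α f` on `ℝⁿ`:
`M_α f (x) = sup_{B ∋ x} |B|^{α/n - 1} ∫_B |f|`. -/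
noncomputable def fracMax (n : ℕ) (α : ℝ) (f : EuclideanSpace ℝ (Fin n) → ℝ)
    (x : EuclideanSpace ℝ (Fin n)) : ℝ≥0∞ :=
  ⨆ (c : EuclideanSpace ℝ (Fin n)) (r : ℝ) (_ : 0 < r) (_ : x ∈ ball c r),
    volume (ball c r) ^ (α / n - 1) * ∫⁻ y in ball c r, (‖f y‖₊ : ℝ≥0∞)

/-- The fractional maximal commutator `M_{α,b} f`:
`M_{α,b} f (x) = sup_{B ∋ x} |B|^{α/n - 1} ∫_B |b(x) - b(y)| |f(y)| dy`. -/
noncomputable def fracMaxComm (n : ℕ) (α : ℝ) (b f : EuclideanSpace ℝ (Fin n) → ℝ)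
    (x : EuclideanSpace ℝ (Fin n)) : ℝ≥0∞ :=
  ⨆ (c : EuclideanSpace ℝ (Fin n)) (r : ℝ) (_ : 0 < r) (_ : x ∈ ball c r),
    volume (ball c r) ^ (α / n - 1) *
      ∫⁻ y in ball c r, (‖b x - b y‖₊ : ℝ≥0∞) * (‖f y‖₊ : ℝ≥0∞)

/-- The local fractional maximal function `M_{α,B₀} f`, supremum over balls `B` with
`x ∈ B ⊆ B₀`. For `α = 0` this is the local Hardy–Littlewood maximal function `M_{B₀}`. -/
noncomputable def fracMaxLocal (n : ℕ) (α : ℝ) (B₀ : Set (EuclideanSpace ℝ (Fin n)))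
    (f : EuclideanSpace ℝ (Fin n) → ℝ) (x : EuclideanSpace ℝ (Fin n)) : ℝ≥0∞ :=
  ⨆ (c : EuclideanSpace ℝ (Fin n)) (r : ℝ) (_ : 0 < r) (_ : x ∈ ball c r)
    (_ : ball c r ⊆ B₀),
    volume (ball c r) ^ (α / n - 1) * ∫⁻ y in ball c r, (‖f y‖₊ : ℝ≥0∞)

/-- The average `b_B = |B|⁻¹ ∫_B b` of `b` over the ball `B = ball c r`. -/
noncomputable def ballAvg (n : ℕ) (b : EuclideanSpace ℝ (Fin n) → ℝ)
    (c : EuclideanSpace ℝ (Fin n)) (r : ℝ) : ℝ :=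
  (volume (ball c r)).toReal⁻¹ * ∫ y in ball c r, b y

/-- if `b ≥ 0` and `b ∈ Λ̇_β` with constant `C`, then for every ball `B`,
`(|B|⁻¹ ∫_B |b(x) - M_B b(x)|^s dx)^{1/s} ≤ K |B|^{β/n}` with `K = K(n, β, s, C)`. -/
theorem stmt14 (n : ℕ) (hn : 1 ≤ n) (β : ℝ) (hβ0 : 0 < β) (hβ1 : β < 1)
    (s : ℝ) (hs : 1 ≤ s)
    (b : EuclideanSpace ℝ (Fin n) → ℝ) (hbpos : ∀ x, 0 ≤ b x) (C : ℝ)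
    (hb : ∀ x y, |b x - b y| ≤ C * ‖x - y‖ ^ β) :
    ∃ K : ℝ, ∀ (c : EuclideanSpace ℝ (Fin n)) (r : ℝ), 0 < r →
      ((volume (ball c r)).toReal⁻¹ *
          ∫ x in ball c r,
            |b x - (fracMaxLocal n 0 (ball c r) b x).toReal| ^ s) ^ (1 / s) ≤
        K * (volume (ball c r)).toReal ^ (β / n) := by
  have hs0 : (0:ℝ) < s := lt_of_lt_of_le one_pos hs
  have hn0 : (0:ℝ) < (n:ℝ) := by exact_mod_cast hn
  haveI hNT : Nontrivial (EuclideanSpace ℝ (Fin n)) := by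
    refine ⟨0, EuclideanSpace.single ⟨0, hn⟩ 1, fun h => ?_⟩
    have := congrArg norm h
    rw [norm_zero, EuclideanSpace.norm_single] at this
    norm_num at this
  have hC : 0 ≤ C := by
    have h := hb 0 (EuclideanSpace.single ⟨0, hn⟩ 1)
    have h1 : ‖(0 : EuclideanSpace ℝ (Fin n)) - EuclideanSpace.single ⟨0, hn⟩ (1:ℝ)‖ = 1 := by
      rw [zero_sub, norm_neg, EuclideanSpace.norm_single]; norm_num
    rw [h1, Real.one_rpow, mul_one] at h
    exact le_trans (abs_nonneg _) h
  set V := (volume (ball (0 : EuclideanSpace ℝ (Fin n)) 1)).toReal with hVdef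
  have hVpos : 0 < V :=
    ENNReal.toReal_pos (measure_ball_pos volume 0 one_pos).ne' measure_ball_lt_top.ne
  refine ⟨C * 2 ^ β * V ^ (-(β / (n:ℝ))), fun c r hr => ?_⟩
  set D := C * (2*r) ^ β with hDdef
  have hDnn : 0 ≤ D := mul_nonneg hC (Real.rpow_nonneg (by linarith) _)
  have hbd : ∀ x ∈ ball c r, ∀ y ∈ ball c r, |b x - b y| ≤ D := by
    intro x hx y hy
    refine le_trans (hb x y) ?_
    refine mul_le_mul_of_nonneg_left ?_ hC
    refine Real.rpow_le_rpow (norm_nonneg _) ?_ hβ0.le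
    rw [← dist_eq_norm]
    calc dist x y ≤ dist x c + dist c y := dist_triangle x c y
      _ ≤ r + r := add_le_add (mem_ball.mp hx).le
          (by rw [dist_comm]; exact (mem_ball.mp hy).le)
      _ = 2 * r := by ring
  have h0 : volume (ball c r) ≠ 0 := (measure_ball_pos volume c hr).ne'
  have hT : volume (ball c r) ≠ ⊤ := measure_ball_lt_top.ne
  -- pointwise bound on the maximal function
  have key : ∀ x ∈ ball c r, |b x - (fracMaxLocal n 0 (ball c r) b x).toReal| ≤ D := by
    intro x hx
    have hub : fracMaxLocal n 0 (ball c r) b x ≤ ENNReal.ofReal (b x + D) := by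
      rw [fracMaxLocal]
      refine iSup_le fun c' => iSup_le fun r' => iSup_le fun hr' => iSup_le fun hx' =>
        iSup_le fun hsub => ?_
      have h0' : volume (ball c' r') ≠ 0 := (measure_ball_pos volume c' hr').ne'
      have hT' : volume (ball c' r') ≠ ⊤ := measure_ball_lt_top.ne
      have hint : ∫⁻ y in ball c' r', (‖b y‖₊ : ℝ≥0∞)
          ≤ volume (ball c' r') * ENNReal.ofReal (b x + D) := by
        calc ∫⁻ y in ball c' r', (‖b y‖₊ : ℝ≥0∞)
            ≤ ∫⁻ _ in ball c' r', ENNReal.ofReal (b x + D) := by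
              refine setLIntegral_mono' measurableSet_ball fun y hy => ?_
              rw [show (‖b y‖₊ : ℝ≥0∞) = ‖b y‖ₑ from rfl, Real.enorm_eq_ofReal (hbpos y)]
              refine ENNReal.ofReal_le_ofReal ?_
              have h2 := (abs_le.mp (hbd x hx y (hsub hy))).1
              linarith
          _ = volume (ball c' r') * ENNReal.ofReal (b x + D) := by
              rw [setLIntegral_const, mul_comm]
      rw [zero_div, zero_sub, ENNReal.rpow_neg_one]
      calc (volume (ball c' r'))⁻¹ * ∫⁻ y in ball c' r', (‖b y‖₊ : ℝ≥0∞)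
          ≤ (volume (ball c' r'))⁻¹ * (volume (ball c' r') * ENNReal.ofReal (b x + D)) :=
            mul_le_mul_right hint _
        _ = ENNReal.ofReal (b x + D) := by
            rw [← mul_assoc, ENNReal.inv_mul_cancel h0' hT', one_mul]
    have hlb : ENNReal.ofReal (b x - D) ≤ fracMaxLocal n 0 (ball c r) b x := by
      have hterm : ENNReal.ofReal (b x - D)
          ≤ volume (ball c r) ^ ((0:ℝ)/(n:ℕ) - 1) * ∫⁻ y in ball c r, (‖b y‖₊ : ℝ≥0∞) := by
        rw [zero_div, zero_sub, ENNReal.rpow_neg_one]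
        have h1 : volume (ball c r) * ENNReal.ofReal (b x - D)
            ≤ ∫⁻ y in ball c r, (‖b y‖₊ : ℝ≥0∞) := by
          calc volume (ball c r) * ENNReal.ofReal (b x - D)
              = ∫⁻ _ in ball c r, ENNReal.ofReal (b x - D) := by
                rw [setLIntegral_const, mul_comm]
            _ ≤ ∫⁻ y in ball c r, (‖b y‖₊ : ℝ≥0∞) := by
                refine setLIntegral_mono' measurableSet_ball fun y hy => ?_
                rw [show (‖b y‖₊ : ℝ≥0∞) = ‖b y‖ₑ from rfl, Real.enorm_eq_ofReal (hbpos y)]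
                refine ENNReal.ofReal_le_ofReal ?_
                have h2 := (abs_le.mp (hbd x hx y hy)).2
                linarith
        calc ENNReal.ofReal (b x - D)
            = (volume (ball c r))⁻¹ * (volume (ball c r) * ENNReal.ofReal (b x - D)) := by
              rw [← mul_assoc, ENNReal.inv_mul_cancel h0 hT, one_mul]
          _ ≤ (volume (ball c r))⁻¹ * ∫⁻ y in ball c r, (‖b y‖₊ : ℝ≥0∞) :=
              mul_le_mul_right h1 _
      refine le_trans hterm ?_
      rw [fracMaxLocal]
      exact le_iSup_of_le c (le_iSup_of_le r (le_iSup_of_le hr (le_iSup_of_le hx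
        (le_iSup_of_le (subset_refl _) le_rfl))))
    have hfin : fracMaxLocal n 0 (ball c r) b x ≠ ⊤ :=
      (lt_of_le_of_lt hub ENNReal.ofReal_lt_top).ne
    have h1 : (fracMaxLocal n 0 (ball c r) b x).toReal ≤ b x + D :=
      ENNReal.toReal_le_of_le_ofReal (by linarith [hbpos x]) hub
    have h2 : b x - D ≤ (fracMaxLocal n 0 (ball c r) b x).toReal := by
      have h3 := ENNReal.toReal_mono hfin hlb
      rw [ENNReal.toReal_ofReal'] at h3
      exact le_trans (le_max_left _ _) h3
    rw [abs_sub_le_iff]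
    constructor <;> linarith
  -- integral bound
  set T : EuclideanSpace ℝ (Fin n) → ℝ :=
    fun x => (fracMaxLocal n 0 (ball c r) b x).toReal with hTdef
  have hIto : ∫ x in ball c r, |b x - T x| ^ s ≤ (volume (ball c r)).toReal * D ^ s := by
    by_cases hint : IntegrableOn (fun x => |b x - T x| ^ s) (ball c r) volume
    · calc ∫ x in ball c r, |b x - T x| ^ s
          ≤ ∫ _ in ball c r, D ^ s := by
            refine setIntegral_mono_on hint
              (integrableOn_const measure_ball_lt_top.ne) measurableSet_ball
              fun x hx => Real.rpow_le_rpow (abs_nonneg _) (key x hx) (by linarith)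
        _ = (volume (ball c r)).toReal * D ^ s := by
            rw [setIntegral_const, smul_eq_mul, Measure.real]
    · rw [integral_undef hint]
      positivity
  have hvolpos : 0 < (volume (ball c r)).toReal := ENNReal.toReal_pos h0 hT
  have hintnn : 0 ≤ ∫ x in ball c r, |b x - T x| ^ s :=
    setIntegral_nonneg measurableSet_ball fun x _ => Real.rpow_nonneg (abs_nonneg _) _
  have hmain : ((volume (ball c r)).toReal⁻¹ * ∫ x in ball c r, |b x - T x| ^ s) ^ (1/s) ≤ D := by
    have h3 : (volume (ball c r)).toReal⁻¹ * ∫ x in ball c r, |b x - T x| ^ s ≤ D ^ s := by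
      calc (volume (ball c r)).toReal⁻¹ * ∫ x in ball c r, |b x - T x| ^ s
          ≤ (volume (ball c r)).toReal⁻¹ * ((volume (ball c r)).toReal * D ^ s) :=
            mul_le_mul_of_nonneg_left hIto (inv_nonneg.mpr hvolpos.le)
        _ = D ^ s := by field_simp
    calc ((volume (ball c r)).toReal⁻¹ * ∫ x in ball c r, |b x - T x| ^ s) ^ (1/s)
        ≤ (D ^ s) ^ (1/s) :=
          Real.rpow_le_rpow (mul_nonneg (inv_nonneg.mpr hvolpos.le) hintnn) h3 (by positivity)
      _ = D := by
          rw [← Real.rpow_mul hDnn, mul_one_div, div_self hs0.ne', Real.rpow_one]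
  refine hmain.trans_eq ?_
  have hvol : (volume (ball c r)).toReal = r ^ n * V := by
    rw [Measure.addHaar_ball volume c hr.le, ENNReal.toReal_mul,
      ENNReal.toReal_ofReal (pow_nonneg hr.le _)]
    simp [finrank_euclideanSpace, hVdef]
  have hVmul : V ^ (-(β / (n:ℝ))) * V ^ (β / (n:ℝ)) = 1 := by
    rw [← Real.rpow_add hVpos, neg_add_cancel, Real.rpow_zero]
  rw [hvol, hDdef]
  rw [Real.mul_rpow (pow_nonneg hr.le _) hVpos.le, ← Real.rpow_natCast r n,
    ← Real.rpow_mul hr.le]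
  have hnb : (n:ℝ) * (β / n) = β := by field_simp
  rw [hnb, Real.mul_rpow (by norm_num : (0:ℝ) ≤ 2) hr.le]
  linear_combination (-(C * 2 ^ β * r ^ β)) * hVmul
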